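/- (Margin of the augmented separator in the general mistake-bound proof.) Let (w, θ) ∈ ℝ^d × ℝ^{K−1} with ‖w‖² + ‖θ‖² = 1, let γ > 0, Δ > 0, and for each t ∈ [T] and i ∈ Ī^t set d_i^t = max(0, γ − z_i^t(w·x^t − θ_i)); let D² = Σ_{t=1}^T Σ_{i∈Ī^t} (d_i^t)² and Z = √(1 + D²/Δ²). Define, for t ∈ [T] and i ∈ Ī^t, the vector x̃_i^t ∈ ℝ^{d+(T+1)(K−1)} whose first d coordinates equal x^t, whose (d+i)-th coordinate equals −1, whose (d+(K−1)t+i)-th coordinate equals Δ, and all other coordinates 0; and define ṽ ∈ ℝ^{d+(T+1)(K−1)} whose first d coordinates are w/Z, next K−1 coordinates are θ/Z, and whose (d+(K−1)t+i)-th coordinate equals z_i^t d_i^t/(ΔZ) for i ∈ Ī^t (all remaining coordinates 0). Then ‖ṽ‖₂ = 1, ‖x̃_i^t‖² = ‖x^t‖² + 1 + Δ² for all t ∈ [T] and i ∈ Ī^t, and z_i^t (ṽ · x̃_i^t) ≥ γ/Z for all t ∈ [T] and i ∈ Ī^t. -/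

import Mathlib

open Finset

noncomputable def dotp {d : ℕ} (w x : Fin d → ℝ) : ℝ := ∑ i, w i * x i

noncomputable def zval (yl : ℕ) (i : ℕ) : ℝ := if i < yl then 1 else -1

def Ibar (K yl yr : ℕ) : Finset ℕ := Finset.Icc 1 (yl - 1) ∪ Finset.Icc yr (K - 1)

noncomputable def tau {d : ℕ} (K yl yr : ℕ) (x w : Fin d → ℝ) (θ : ℕ → ℝ) (i : ℕ) : ℝ :=
  if i ∈ Ibar K yl yr ∧ zval yl i * (dotp w x - θ i) ≤ 0 then zval yl i else 0

noncomputable def LMAE (K : ℕ) (f : ℝ) (θ : ℕ → ℝ) (yl yr : ℕ) : ℝ :=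
  (∑ i ∈ Finset.Icc 1 (yl - 1), if f < θ i then (1:ℝ) else 0) +
  (∑ i ∈ Finset.Icc yr (K - 1), if θ i ≤ f then (1:ℝ) else 0)

noncomputable def LIMC (K : ℕ) (f : ℝ) (yl yr : ℕ) (θ : ℕ → ℝ) : ℝ :=
  (∑ i ∈ Finset.Icc 1 (yl - 1), max 0 (θ i - f)) +
  (∑ i ∈ Finset.Icc yr (K - 1), max 0 (f - θ i))

noncomputable def mcount {d : ℕ} (K yl yr : ℕ) (x w : Fin d → ℝ) (θ : ℕ → ℝ) : ℕ :=
  ((Ibar K yl yr).filter (fun i => zval yl i * (dotp w x - θ i) ≤ 0)).card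

lemma sum_range_mul' (f : ℕ → ℝ) (a b : ℕ) :
    ∑ m ∈ Finset.range (a*b), f m = ∑ t ∈ Finset.range a, ∑ r ∈ Finset.range b, f (b*t + r) := by
  induction a with
  | zero => simp
  | succ n ih =>
    rw [Nat.succ_mul, Finset.sum_range_add, ih, Finset.sum_range_succ]
    congr 1
    exact Finset.sum_congr rfl fun r _ => by rw [Nat.mul_comm]

lemma sum_Icc_one (n : ℕ) (f : ℕ → ℝ) :
    ∑ i ∈ Finset.Icc 1 n, f i = ∑ r ∈ Finset.range n, f (r+1) := by
  rw [← Finset.Ico_add_one_right_eq_Icc, Finset.sum_Ico_eq_sum_range]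
  rw [show n + 1 - 1 = n from rfl]
  exact Finset.sum_congr rfl fun r _ => by rw [Nat.add_comm]

lemma zval_sq (yl i : ℕ) : zval yl i * zval yl i = 1 := by
  unfold zval; split <;> norm_num

lemma Ibar_bounds {K yl yr i : ℕ} (hyl : 1 ≤ yl) (hlr : yl ≤ yr) (hrK : yr ≤ K)
    (hi : i ∈ Ibar K yl yr) : 1 ≤ i ∧ i ≤ K - 1 := by
  unfold Ibar at hi
  simp only [Finset.mem_union, Finset.mem_Icc] at hi
  omega

set_option maxHeartbeats 1000000 in
/-- Margin of the augmented separator in the general mistake-bound proof.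
Coordinates of `ℝ^{d+(T+1)(K-1)}` are indexed (0-based) by `j ∈ range (d+(T+1)*(K-1))`:
the 1-based coordinate `d+i` is `j = d+i-1`, and the 1-based coordinate
`d+(K-1)t+i` is `j = d+(K-1)*t+i-1`, which is decoded by `t = (j-d)/(K-1)`,
`i = (j-d) % (K-1) + 1`. -/
theorem augmented_separator_margin
    {d K T : ℕ} (hd : 1 ≤ d) (hK : 2 ≤ K) (hT : 1 ≤ T)
    (x : ℕ → Fin d → ℝ) (yl yr : ℕ → ℕ)
    (hy : ∀ t ∈ Finset.Icc 1 T, 1 ≤ yl t ∧ yl t ≤ yr t ∧ yr t ≤ K)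
    (wv : Fin d → ℝ) (θv : ℕ → ℝ)
    (hnorm : (∑ i, wv i ^ 2) + (∑ i ∈ Finset.Icc 1 (K-1), θv i ^ 2) = 1)
    (γ Δ : ℝ) (hγ : 0 < γ) (hΔ : 0 < Δ)
    (dv : ℕ → ℕ → ℝ)
    (hdv : ∀ t i, dv t i = max 0 (γ - zval (yl t) i * (dotp wv (x t) - θv i)))
    (D : ℝ) (hD : 0 ≤ D)
    (hD2 : D ^ 2 = ∑ t ∈ Finset.Icc 1 T, ∑ i ∈ Ibar K (yl t) (yr t), (dv t i) ^ 2)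
    (Z : ℝ) (hZ : Z = Real.sqrt (1 + D ^ 2 / Δ ^ 2))
    (xt : ℕ → ℕ → ℕ → ℝ)
    (hxt : ∀ t i j, xt t i j =
      if h : j < d then x t ⟨j, h⟩
      else if j = d + i - 1 then -1
      else if j = d + (K-1) * t + i - 1 then Δ
      else 0)
    (vt : ℕ → ℝ)
    (hvt : ∀ j, vt j =
      if h : j < d then wv ⟨j, h⟩ / Z
      else if j < d + (K-1) then θv (j - d + 1) / Z
      else if (j - d) / (K-1) ∈ Finset.Icc 1 T ∧
              ((j - d) % (K-1) + 1) ∈ Ibar K (yl ((j - d) / (K-1))) (yr ((j - d) / (K-1)))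
        then zval (yl ((j - d) / (K-1))) ((j - d) % (K-1) + 1)
              * dv ((j - d) / (K-1)) ((j - d) % (K-1) + 1) / (Δ * Z)
        else 0) :
    (∑ j ∈ Finset.range (d + (T+1) * (K-1)), (vt j) ^ 2 = 1) ∧
    (∀ t ∈ Finset.Icc 1 T, ∀ i ∈ Ibar K (yl t) (yr t),
      ∑ j ∈ Finset.range (d + (T+1) * (K-1)), (xt t i j) ^ 2
        = (∑ k, (x t k) ^ 2) + 1 + Δ ^ 2) ∧
    (∀ t ∈ Finset.Icc 1 T, ∀ i ∈ Ibar K (yl t) (yr t),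
      γ / Z ≤ zval (yl t) i * ∑ j ∈ Finset.range (d + (T+1) * (K-1)), vt j * xt t i j) := by
  have hZ2 : Z ^ 2 = 1 + D ^ 2 / Δ ^ 2 := by
    rw [hZ, Real.sq_sqrt]; positivity
  have hZpos : 0 < Z := by
    rw [hZ]; apply Real.sqrt_pos.2; positivity
  have hZne : Z ≠ 0 := ne_of_gt hZpos
  have hΔne : Δ ≠ 0 := ne_of_gt hΔ
  have hdiv : ∀ t r : ℕ, r < K-1 → ((K-1)*t + r) / (K-1) = t := by
    intro t r hr
    rw [Nat.mul_add_div (by omega), Nat.div_eq_of_lt hr, Nat.add_zero]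
  have hmod : ∀ t r : ℕ, r < K-1 → ((K-1)*t + r) % (K-1) = r := by
    intro t r hr
    rw [Nat.mul_add_mod, Nat.mod_eq_of_lt hr]
  -- evaluations of vt
  have hvt_w : ∀ j (h : j < d), vt j = wv ⟨j, h⟩ / Z := by
    intro j h; rw [hvt, dif_pos h]
  have hvt_theta : ∀ r, r < K - 1 → vt (d + r) = θv (r+1) / Z := by
    intro r hr
    rw [hvt, dif_neg (by omega), if_pos (by omega)]
    congr 2
    omega
  have hvt_block : ∀ t r, 1 ≤ t → t ≤ T → r < K-1 →
      vt (d + ((K-1)*t + r)) =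
        if (r+1) ∈ Ibar K (yl t) (yr t)
          then zval (yl t) (r+1) * dv t (r+1) / (Δ * Z) else 0 := by
    intro t r ht1 htT hr
    have hge : K-1 ≤ (K-1)*t := Nat.le_mul_of_pos_right _ (by omega)
    rw [hvt, dif_neg (by omega), if_neg (by omega)]
    rw [show d + ((K-1)*t + r) - d = (K-1)*t + r from by omega]
    rw [hdiv t r hr, hmod t r hr]
    simp only [Finset.mem_Icc, ht1, htT, and_self, true_and]
  -- w-part sums
  have hw_sum : ∀ f : Fin d → ℝ,
      ∑ j ∈ Finset.range d, (if h : j < d then f ⟨j, h⟩ else 0) = ∑ k, f k := by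
    intro f
    rw [← Fin.sum_univ_eq_sum_range (fun j => if h : j < d then f ⟨j, h⟩ else 0) d]
    exact Finset.sum_congr rfl fun k _ => by rw [dif_pos k.isLt]
  -- Part 1
  have part1 : ∑ j ∈ Finset.range (d + (T+1) * (K-1)), (vt j) ^ 2 = 1 := by
    rw [Finset.sum_range_add]
    rw [sum_range_mul' (fun m => vt (d + m) ^ 2) (T+1) (K-1)]
    rw [Finset.sum_range_succ']
    have ew : ∑ j ∈ Finset.range d, vt j ^ 2 = (∑ k, wv k ^ 2) / Z ^ 2 := by
      calc ∑ j ∈ Finset.range d, vt j ^ 2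
          = ∑ j ∈ Finset.range d, (if h : j < d then wv ⟨j, h⟩ ^ 2 / Z ^ 2 else 0) := by
            refine Finset.sum_congr rfl fun j hj => ?_
            have hj' := Finset.mem_range.1 hj
            rw [hvt_w j hj', dif_pos hj', div_pow]
        _ = ∑ k, wv k ^ 2 / Z ^ 2 := hw_sum (fun k => wv k ^ 2 / Z ^ 2)
        _ = (∑ k, wv k ^ 2) / Z ^ 2 := by rw [Finset.sum_div]
    have e0 : ∑ r ∈ Finset.range (K-1), vt (d + ((K-1)*0 + r)) ^ 2
        = (∑ i ∈ Finset.Icc 1 (K-1), θv i ^ 2) / Z ^ 2 := by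
      rw [sum_Icc_one, Finset.sum_div]
      refine Finset.sum_congr rfl fun r hr => ?_
      rw [Finset.mem_range] at hr
      rw [show (K-1)*0 + r = r from by omega, hvt_theta r hr, div_pow]
    have eblk : ∑ t ∈ Finset.range T, ∑ r ∈ Finset.range (K-1), vt (d + ((K-1)*(t+1) + r)) ^ 2
        = D ^ 2 / (Δ ^ 2 * Z ^ 2) := by
      rw [hD2, sum_Icc_one T, Finset.sum_div]
      refine Finset.sum_congr rfl fun t ht => ?_
      rw [Finset.mem_range] at ht
      have ht1 : 1 ≤ t + 1 := by omega
      have htT : t + 1 ≤ T := by omega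
      obtain ⟨hyl, hlr, hrK⟩ := hy (t+1) (Finset.mem_Icc.2 ⟨ht1, htT⟩)
      have hsub : Ibar K (yl (t+1)) (yr (t+1)) ⊆ Finset.Icc 1 (K-1) :=
        fun i hi => Finset.mem_Icc.2 (Ibar_bounds hyl hlr hrK hi)
      calc ∑ r ∈ Finset.range (K-1), vt (d + ((K-1)*(t+1) + r)) ^ 2
          = ∑ r ∈ Finset.range (K-1),
              (if (r+1) ∈ Ibar K (yl (t+1)) (yr (t+1))
                then dv (t+1) (r+1) ^ 2 / (Δ ^ 2 * Z ^ 2) else 0) := by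
            refine Finset.sum_congr rfl fun r hr => ?_
            have hr' := Finset.mem_range.1 hr
            rw [hvt_block (t+1) r ht1 htT hr']
            split
            · rw [div_pow, mul_pow, pow_two (zval _ _), zval_sq, one_mul, mul_pow]
            · rw [zero_pow]; omega
        _ = ∑ i ∈ Finset.Icc 1 (K-1),
              (if i ∈ Ibar K (yl (t+1)) (yr (t+1))
                then dv (t+1) i ^ 2 / (Δ ^ 2 * Z ^ 2) else 0) := (sum_Icc_one (K-1) (fun i => if i ∈ Ibar K (yl (t+1)) (yr (t+1)) then dv (t+1) i ^ 2 / (Δ ^ 2 * Z ^ 2) else 0)).symm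
        _ = ∑ i ∈ Ibar K (yl (t+1)) (yr (t+1)), dv (t+1) i ^ 2 / (Δ ^ 2 * Z ^ 2) := by
            rw [Finset.sum_ite_mem, Finset.inter_eq_right.2 hsub]
        _ = (∑ i ∈ Ibar K (yl (t+1)) (yr (t+1)), dv (t+1) i ^ 2) / (Δ ^ 2 * Z ^ 2) := by
            rw [Finset.sum_div]
    rw [ew, e0, eblk]
    have key : (∑ k, wv k ^ 2) + (D ^ 2 / Δ ^ 2 + ∑ i ∈ Finset.Icc 1 (K-1), θv i ^ 2)
        = Z ^ 2 := by rw [hZ2]; linarith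
    have expand : (∑ k, wv k ^ 2) / Z ^ 2 + (D ^ 2 / (Δ ^ 2 * Z ^ 2)
          + (∑ i ∈ Finset.Icc 1 (K-1), θv i ^ 2) / Z ^ 2)
        = ((∑ k, wv k ^ 2) + (D ^ 2 / Δ ^ 2 + ∑ i ∈ Finset.Icc 1 (K-1), θv i ^ 2)) / Z ^ 2 := by
      field_simp
    rw [expand, key, div_self (pow_ne_zero 2 hZne)]
  refine ⟨part1, ?_, ?_⟩
  · -- Part 2
    intro t ht i hi
    rw [Finset.mem_Icc] at ht
    obtain ⟨hyl, hlr, hrK⟩ := hy t (Finset.mem_Icc.2 ht)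
    have hib := Ibar_bounds hyl hlr hrK hi
    obtain ⟨i', rfl⟩ : ∃ i', i = i' + 1 := ⟨i - 1, by omega⟩
    have hi'K : i' < K - 1 := by omega
    have hge : K-1 ≤ (K-1)*t := Nat.le_mul_of_pos_right _ (by omega)
    have hgeT : (K-1)*t ≤ (K-1)*T := Nat.mul_le_mul_left _ ht.2
    have hTK : (T+1)*(K-1) = (K-1)*T + (K-1) := by ring
    have hxt' : ∀ m, xt t (i'+1) (d+m) =
        if m = i' then -1 else if m = (K-1)*t + i' then Δ else 0 := by
      intro m
      rw [hxt, dif_neg (by omega)]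
      have h1 : (d + m = d + (i'+1) - 1) ↔ m = i' := by omega
      have h2 : (d + m = d + (K-1)*t + (i'+1) - 1) ↔ m = (K-1)*t + i' := by omega
      simp only [h1, h2]
    rw [Finset.sum_range_add]
    have e1 : ∑ j ∈ Finset.range d, xt t (i'+1) j ^ 2 = ∑ k, x t k ^ 2 := by
      calc ∑ j ∈ Finset.range d, xt t (i'+1) j ^ 2
          = ∑ j ∈ Finset.range d, (if h : j < d then x t ⟨j, h⟩ ^ 2 else 0) := by
            refine Finset.sum_congr rfl fun j hj => ?_
            have hj' := Finset.mem_range.1 hj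
            rw [hxt, dif_pos hj', dif_pos hj']
        _ = ∑ k, x t k ^ 2 := hw_sum (fun k => x t k ^ 2)
    have hm2 : (K-1)*t + i' ≠ i' := by omega
    have e2 : ∑ m ∈ Finset.range ((T+1)*(K-1)), xt t (i'+1) (d+m) ^ 2 = 1 + Δ ^ 2 := by
      calc ∑ m ∈ Finset.range ((T+1)*(K-1)), xt t (i'+1) (d+m) ^ 2
          = ∑ m ∈ Finset.range ((T+1)*(K-1)),
              (if m = i' then (-1:ℝ) else if m = (K-1)*t + i' then Δ else 0) ^ 2 :=
            Finset.sum_congr rfl fun m _ => by rw [hxt' m]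
        _ = 1 + Δ ^ 2 := by
            rw [Finset.sum_eq_add i' ((K-1)*t + i') (by omega)
              (fun c _ hc => by rw [if_neg hc.1, if_neg hc.2]; norm_num)
              (fun h => absurd (Finset.mem_range.2 (by omega)) h)
              (fun h => absurd (Finset.mem_range.2 (by omega)) h)]
            simp [hm2]
            intro h; exfalso; omega
    rw [e1, e2]; ring
  · -- Part 3
    intro t ht i hi
    rw [Finset.mem_Icc] at ht
    obtain ⟨hyl, hlr, hrK⟩ := hy t (Finset.mem_Icc.2 ht)
    have hib := Ibar_bounds hyl hlr hrK hi
    obtain ⟨i', rfl⟩ : ∃ i', i = i' + 1 := ⟨i - 1, by omega⟩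
    have hi'K : i' < K - 1 := by omega
    have hge : K-1 ≤ (K-1)*t := Nat.le_mul_of_pos_right _ (by omega)
    have hgeT : (K-1)*t ≤ (K-1)*T := Nat.mul_le_mul_left _ ht.2
    have hTK : (T+1)*(K-1) = (K-1)*T + (K-1) := by ring
    have hxt' : ∀ m, xt t (i'+1) (d+m) =
        if m = i' then -1 else if m = (K-1)*t + i' then Δ else 0 := by
      intro m
      rw [hxt, dif_neg (by omega)]
      have h1 : (d + m = d + (i'+1) - 1) ↔ m = i' := by omega
      have h2 : (d + m = d + (K-1)*t + (i'+1) - 1) ↔ m = (K-1)*t + i' := by omega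
      simp only [h1, h2]
    rw [Finset.sum_range_add]
    have e1 : ∑ j ∈ Finset.range d, vt j * xt t (i'+1) j = dotp wv (x t) / Z := by
      calc ∑ j ∈ Finset.range d, vt j * xt t (i'+1) j
          = ∑ j ∈ Finset.range d, (if h : j < d then wv ⟨j, h⟩ * x t ⟨j, h⟩ / Z else 0) := by
            refine Finset.sum_congr rfl fun j hj => ?_
            have hj' := Finset.mem_range.1 hj
            rw [hvt_w j hj', hxt, dif_pos hj', dif_pos hj']
            ring
        _ = ∑ k, wv k * x t k / Z := hw_sum (fun k => wv k * x t k / Z)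
        _ = dotp wv (x t) / Z := by rw [← Finset.sum_div]; rfl
    have hm2 : (K-1)*t + i' ≠ i' := by omega
    have e2 : ∑ m ∈ Finset.range ((T+1)*(K-1)), vt (d+m) * xt t (i'+1) (d+m)
        = -(θv (i'+1) / Z) + zval (yl t) (i'+1) * dv t (i'+1) / (Δ * Z) * Δ := by
      calc ∑ m ∈ Finset.range ((T+1)*(K-1)), vt (d+m) * xt t (i'+1) (d+m)
          = ∑ m ∈ Finset.range ((T+1)*(K-1)),
              vt (d+m) * (if m = i' then (-1:ℝ) else if m = (K-1)*t + i' then Δ else 0) :=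
            Finset.sum_congr rfl fun m _ => by rw [hxt' m]
        _ = vt (d+i') * (-1) + vt (d+((K-1)*t+i')) * Δ := by
            rw [Finset.sum_eq_add i' ((K-1)*t + i') (by omega)
              (fun c _ hc => by rw [if_neg hc.1, if_neg hc.2, mul_zero])
              (fun h => absurd (Finset.mem_range.2 (by omega)) h)
              (fun h => absurd (Finset.mem_range.2 (by omega)) h)]
            simp [hm2]
            intro h; exfalso; omega
        _ = -(θv (i'+1) / Z) + zval (yl t) (i'+1) * dv t (i'+1) / (Δ * Z) * Δ := by
            rw [hvt_theta i' hi'K, hvt_block t i' ht.1 ht.2 hi'K, if_pos hi]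
            ring
    rw [e1, e2]
    have hzz := zval_sq (yl t) (i'+1)
    have hdd : γ - zval (yl t) (i'+1) * (dotp wv (x t) - θv (i'+1)) ≤ dv t (i'+1) := by
      rw [hdv]; exact le_max_right _ _
    have heq : zval (yl t) (i'+1) *
        (dotp wv (x t) / Z + (-(θv (i'+1) / Z) + zval (yl t) (i'+1) * dv t (i'+1) / (Δ * Z) * Δ))
        = (zval (yl t) (i'+1) * (dotp wv (x t) - θv (i'+1)) + dv t (i'+1)) / Z := by
      field_simp
      linear_combination dv t (i'+1) * hzz
    rw [heq]
    exact (div_le_div_iff_of_pos_right hZpos).2 (by linarith)
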